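/- Let P, Q ∈ L^(l)∖{0} and (ρ,σ) ∈ 𝔙. If [ℓ_{ρ,σ}(P), ℓ_{ρ,σ}(Q)] = 0, then st_{ρ,σ}(P) ∼ st_{ρ,σ}(Q) and en_{ρ,σ}(P) ∼ en_{ρ,σ}(Q). -/

import Mathlib

/-!
Formalization framework for "On the shape of possible counterexamples to the Jacobian
Conjecture" by Guccione–Guccione–Valqui.

The algebra `L^(l) = K[x^{1/l}, x^{-1/l}, y]` is modelled as the monoid algebra of the
additive monoid `ℤ × ℕ` over `K`, where the exponent pair `(i, j)` encodes the monomial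
`x^(i/l) * y^j`.
-/

open scoped Classical

set_option linter.unusedSectionVars false

noncomputable section

namespace JC

variable (K : Type*) [Field K] [CharZero K]

/-- `L^(l)`, modelled as the monoid algebra on `ℤ × ℕ`. -/
abbrev Ll := AddMonoidAlgebra K (ℤ × ℕ)

variable {K}

/-- The variable `x = (x^{1/l})^l` of `L = K[x,y] ⊆ L^(l)`. -/
def xVar (l : ℕ) : Ll K := AddMonoidAlgebra.ofCoeff (Finsupp.single ((l : ℤ), (0 : ℕ)) (1 : K))

/-- The variable `y`. -/
def yVar : Ll K := AddMonoidAlgebra.ofCoeff (Finsupp.single ((0 : ℤ), (1 : ℕ)) (1 : K))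

/-- The partial derivative `∂ₓ` on `L^(l)`:  `x^(i/l) y^j ↦ (i/l) x^(i/l - 1) y^j`. -/
def dX (l : ℕ) (P : Ll K) : Ll K :=
  Finsupp.sum P.coeff fun p c =>
    AddMonoidAlgebra.ofCoeff (Finsupp.single (p.1 - (l : ℤ), p.2) (c * ((p.1 : K) / (l : K))))

/-- The partial derivative `∂ᵧ` on `L^(l)`. -/
def dY (P : Ll K) : Ll K :=
  Finsupp.sum P.coeff fun p c => AddMonoidAlgebra.ofCoeff (Finsupp.single (p.1, p.2 - 1) (c * (p.2 : K)))

/-- The Jacobian `[P,Q] = ∂ₓP ∂ᵧQ − ∂ᵧP ∂ₓQ`. -/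
def br (l : ℕ) (P Q : Ll K) : Ll K := dX l P * dY Q - dY P * dX l Q

/-- `[P,Q] ∈ K^×`, i.e. the Jacobian is a nonzero constant. -/
def JacConst (l : ℕ) (P Q : Ll K) : Prop :=
  ∃ c : K, c ≠ 0 ∧ br l P Q = algebraMap K (Ll K) c

/-- Membership in `L = K[x,y] ⊆ L^(l)`: all exponents `i/l` are nonnegative integers. -/
def InL (l : ℕ) (P : Ll K) : Prop := ∀ p ∈ P.coeff.support, 0 ≤ p.1 ∧ (l : ℤ) ∣ p.1

/-- The point `(i/l, j)` of `ℚ²` attached to an exponent pair `(i,j)`. -/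
def pt (l : ℕ) (p : ℤ × ℕ) : ℚ × ℚ := ((p.1 : ℚ) / (l : ℚ), (p.2 : ℚ))

/-- The `(ρ,σ)`-degree `ρ·(i/l) + σ·j` of an exponent pair. -/
def dg (l : ℕ) (ρ σ : ℤ) (p : ℤ × ℕ) : ℚ :=
  (ρ : ℚ) * ((p.1 : ℚ) / (l : ℚ)) + (σ : ℚ) * (p.2 : ℚ)

/-- `v_{ρ,σ}(P) ∈ WithBot ℚ`, with the convention `v_{ρ,σ}(0) = ⊥ = −∞`. -/
def v (l : ℕ) (ρ σ : ℤ) (P : Ll K) : WithBot ℚ :=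
  P.coeff.support.sup fun p => ((dg l ρ σ p : ℚ) : WithBot ℚ)

/-- `ℚ`-valued `(ρ,σ)`-degree (with junk value `0` at `P = 0`). -/
def vq (l : ℕ) (ρ σ : ℤ) (P : Ll K) : ℚ := (v l ρ σ P).unbotD 0

/-- The `(ρ,σ)`-leading form `ℓ_{ρ,σ}(P)`. -/
def lead (l : ℕ) (ρ σ : ℤ) (P : Ll K) : Ll K :=
  AddMonoidAlgebra.ofCoeff (Finsupp.filter (fun p => ((dg l ρ σ p : ℚ) : WithBot ℚ) = v l ρ σ P) P.coeff)

/-- `(ρ,σ)`-homogeneity. -/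
def IsHomog (l : ℕ) (ρ σ : ℤ) (P : Ll K) : Prop := P = lead l ρ σ P

/-- Directions: coprime pairs of integers. -/
def IsDirV (d : ℤ × ℤ) : Prop := Int.gcd d.1 d.2 = 1

/-- `Dir(P)`: the set of directions in which the leading form is not a monomial. -/
def DirSet (l : ℕ) (P : Ll K) : Set (ℤ × ℤ) :=
  {d | IsDirV d ∧ 1 < (lead l d.1 d.2 P).coeff.support.card}

/-- Cross product of two vectors of `ℚ²`. -/
def cross (A B : ℚ × ℚ) : ℚ := A.1 * B.2 - A.2 * B.1

/-- Dot product of two vectors of `ℚ²`. -/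
def dot (A B : ℚ × ℚ) : ℚ := A.1 * B.1 + A.2 * B.2

/-- Alignment `A ∼ B`. -/
def Aligned (A B : ℚ × ℚ) : Prop := cross A B = 0

/-- A pair of integers viewed in `ℚ²`. -/
def dq (d : ℤ × ℤ) : ℚ × ℚ := ((d.1 : ℚ), (d.2 : ℚ))

/-- Evaluation `v_{ρ,σ}` at a point of `ℚ²`. -/
def vpt (ρ σ : ℤ) (A : ℚ × ℚ) : ℚ := (ρ : ℚ) * A.1 + (σ : ℚ) * A.2

/-- `st_{ρ,σ}(P)`: the endpoint of the segment `Supp(ℓ_{ρ,σ}(P))` at which the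
functional `(ρ,σ) × ·` is minimal (so that `(ρ,σ) × (en − st) ≥ 0`). -/
def stPt (l : ℕ) (ρ σ : ℤ) (P : Ll K) : ℚ × ℚ :=
  if h : (lead l ρ σ P).coeff.support.Nonempty then
    pt l <| Classical.choose <|
      (lead l ρ σ P).coeff.support.exists_min_image (fun p => cross (dq (ρ, σ)) (pt l p)) h
  else (0, 0)

/-- `en_{ρ,σ}(P)`: the other endpoint of the segment `Supp(ℓ_{ρ,σ}(P))`. -/
def enPt (l : ℕ) (ρ σ : ℤ) (P : Ll K) : ℚ × ℚ :=
  if h : (lead l ρ σ P).coeff.support.Nonempty then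
    pt l <| Classical.choose <|
      (lead l ρ σ P).coeff.support.exists_max_image (fun p => cross (dq (ρ, σ)) (pt l p)) h
  else (0, 0)

/-- The index (`0`–`3`) of a direction `a` in the counterclockwise sweep of the circle of
directions starting just after the base direction `u`. -/
def idx (u a : ℤ × ℤ) : ℕ :=
  if 0 < cross (dq u) (dq a) then 0
  else if cross (dq u) (dq a) = 0 ∧ dot (dq u) (dq a) < 0 then 1
  else if cross (dq u) (dq a) < 0 then 2
  else 3

/-- The strict counterclockwise order on directions with base point `u`:  `a` is
encountered strictly before `b` when running counterclockwise starting just after `u`. -/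
def ccwLt (u a b : ℤ × ℤ) : Prop :=
  idx u a < idx u b ∨ (idx u a = idx u b ∧ 0 < cross (dq a) (dq b))

/-- Reflexive closure of `ccwLt`. -/
def ccwLe (u a b : ℤ × ℤ) : Prop := a = b ∨ ccwLt u a b

/-- `w = Succ_P(u)`: the first element of `Dir(P)` encountered starting from `u` and
running counterclockwise. -/
def IsSucc (l : ℕ) (P : Ll K) (u w : ℤ × ℤ) : Prop :=
  w ∈ DirSet l P ∧ w ≠ u ∧ ∀ w' ∈ DirSet l P, w' ≠ u → ccwLe u w w'

/-- `(m,n)`-pairs in `L^(l)`. -/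
structure IsMNPair (l m n : ℕ) (P Q : Ll K) : Prop where
  coprime : Nat.Coprime m n
  one_lt_m : 1 < m
  one_lt_n : 1 < n
  jac : JacConst l P Q
  ratio11 : vq l 1 1 P / vq l 1 1 Q = (m : ℚ) / (n : ℚ)
  ratio10 : vq l 1 0 P / vq l 1 0 Q = (m : ℚ) / (n : ℚ)
  en10 : vpt 1 (-1) (enPt l 1 0 P) < 0

/-- Standard `(m,n)`-pairs (in `L^(1)`). -/
def IsStandard (m n : ℕ) (P Q : Ll K) : Prop :=
  IsMNPair 1 m n P Q ∧ vpt 1 (-1) (stPt 1 1 0 P) < 0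

/-- Membership in the interval of directions `I = ](1,−1),(1,0)]`. -/
def InI (d : ℤ × ℤ) : Prop := IsDirV d ∧ 0 < d.1 + d.2 ∧ d.2 ≤ 0

/-- Regular corners of an `(m,n)`-pair. -/
def IsRegCorner (l m : ℕ) (P : Ll K) (A : ℚ × ℚ) (d : ℤ × ℤ) : Prop :=
  (∃ a : ℤ, ∃ b : ℕ, A = ((a : ℚ) / (l : ℚ), (b : ℚ)) ∧ 1 ≤ b ∧ (a : ℚ) / (l : ℚ) < (b : ℚ)) ∧
  InI d ∧ d ∈ DirSet l P ∧ enPt l d.1 d.2 P = ((m : ℚ) * A.1, (m : ℚ) * A.2)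

/-- The set `A(P)`. -/
def ASet (l : ℕ) (P : Ll K) : Set (ℤ × ℤ) :=
  {d | d ∈ DirSet l P ∧ InI d ∧
    vpt 0 (-1) (stPt l d.1 d.2 P) < -1 ∧ vpt 1 (-1) (stPt l d.1 d.2 P) < 0}

/-- The univariate polynomial `𝔭` with `ℓ_{ρ,σ}(P) = x^(k/l) 𝔭(z)`, `z := x^(−σ/ρ) y`
(for a `(ρ,σ)`-homogeneous element with `ρ > 0`, the `z`-degree equals the `y`-degree). -/
def toPoly (R : Ll K) : Polynomial K :=
  Finsupp.sum R.coeff fun p c => Polynomial.C c * Polynomial.X ^ p.2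

/-- The minimal `y`-exponent occurring in `R`. -/
def ymin (R : Ll K) : ℕ := sInf (Prod.snd '' (R.coeff.support : Set (ℤ × ℕ)))

/-- The univariate polynomial `p` with `ℓ_{ρ,σ}(P) = x^(r/l) y^s p(z)` and `p(0) ≠ 0`. -/
def toPolyL (R : Ll K) : Polynomial K :=
  Finsupp.sum R.coeff fun p c => Polynomial.C c * Polynomial.X ^ (p.2 - ymin R)

/-- A regular corner in direction `d` is of type II. -/
def TypeII (l : ℕ) (P Q : Ll K) (d : ℤ × ℤ) : Prop :=
  br l (lead l d.1 d.2 P) (lead l d.1 d.2 Q) = 0 ∧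
    1 < (toPoly (lead l d.1 d.2 P)).roots.toFinset.card

variable (K)

/-- The polynomial subalgebra `K[x,y] ⊆ L^(1)`. -/
def polyAlg : Subalgebra K (Ll K) := Algebra.adjoin K {xVar 1, yVar}

/-- `(P,Q)` is a counterexample to the Jacobian Conjecture: `P, Q ∈ K[x,y]`, the Jacobian
`[P,Q]` is a nonzero constant, and `K[P,Q] ≠ K[x,y]`. -/
def IsCtrex (P Q : Ll K) : Prop :=
  P ∈ polyAlg K ∧ Q ∈ polyAlg K ∧ JacConst 1 P Q ∧ Algebra.adjoin K {P, Q} ≠ polyAlg K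

/-- The set of numbers `gcd(v_{1,1}(P), v_{1,1}(Q))` over all counterexamples `(P,Q)`. -/
def BSet : Set ℕ :=
  {d | ∃ P Q : Ll K, ∃ dP dQ : ℕ, IsCtrex K P Q ∧
    (dP : ℚ) = vq 1 1 1 P ∧ (dQ : ℚ) = vq 1 1 1 Q ∧ d = Nat.gcd dP dQ}

/-- The number `B`: the minimum of `gcd(v_{1,1}(P), v_{1,1}(Q))` over all counterexamples. -/
def Bnum : ℕ := sInf (BSet K)

variable {K}


/-- Additivity of the functional `p ↦ (ρ,σ) × pt(p)` in the exponent. -/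
lemma cross_dq_pt_add (u : ℤ × ℤ) (l : ℕ) (A B : ℤ × ℕ) :
    cross (dq u) (pt l (A + B)) = cross (dq u) (pt l A) + cross (dq u) (pt l B) := by
  simp only [cross, dq, pt, Prod.fst_add, Prod.snd_add]
  push_cast
  ring

/-- Two exponents with the same `(ρ,σ)`-degree and the same cross-functional coincide. -/
lemma exp_eq_of_dg_cross (l : ℕ) (hl : 0 < l) (ρ σ : ℤ) (hdir : IsDirV (ρ, σ))
    (A z : ℤ × ℕ) (h1 : dg l ρ σ A = dg l ρ σ z)
    (h2 : cross (dq (ρ, σ)) (pt l A) = cross (dq (ρ, σ)) (pt l z)) : A = z := by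
  have hns : ρ ≠ 0 ∨ σ ≠ 0 := by
    by_contra hc
    push_neg at hc
    simp [IsDirV, hc.1, hc.2] at hdir
  have hne : (ρ : ℚ) ^ 2 + (σ : ℚ) ^ 2 ≠ 0 := by
    rcases hns with h | h
    · have h0 : (ρ : ℚ) ≠ 0 := Int.cast_ne_zero.mpr h
      positivity
    · have h0 : (σ : ℚ) ≠ 0 := Int.cast_ne_zero.mpr h
      positivity
  have hl0 : (l : ℚ) ≠ 0 := Nat.cast_ne_zero.mpr hl.ne'
  simp only [dg, cross, dq, pt] at h1 h2
  have e1 : ((ρ : ℚ) ^ 2 + (σ : ℚ) ^ 2) * ((A.1 : ℚ) / l) =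
      ((ρ : ℚ) ^ 2 + (σ : ℚ) ^ 2) * ((z.1 : ℚ) / l) := by
    linear_combination (ρ : ℚ) * h1 - (σ : ℚ) * h2
  have e2 : ((ρ : ℚ) ^ 2 + (σ : ℚ) ^ 2) * ((A.2 : ℚ)) =
      ((ρ : ℚ) ^ 2 + (σ : ℚ) ^ 2) * ((z.2 : ℚ)) := by
    linear_combination (σ : ℚ) * h1 + (ρ : ℚ) * h2
  have hA1 := mul_left_cancel₀ hne e1
  have hA1' : A.1 = z.1 := by
    field_simp at hA1
    exact_mod_cast hA1
  have hA2 : A.2 = z.2 := by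
    have := mul_left_cancel₀ hne e2
    exact_mod_cast this
  exact Prod.ext hA1' hA2

lemma sum_sum_eq_single {α β M : Type*} [AddCommMonoid M] (s : Finset α) (t : Finset β)
    (f : α → β → M) (z : α) (w : β) (hz : z ∈ s) (hw : w ∈ t)
    (h0 : ∀ p ∈ s, ∀ q ∈ t, (p, q) ≠ (z, w) → f p q = 0) :
    ∑ p ∈ s, ∑ q ∈ t, f p q = f z w := by
  classical
  rw [← Finset.sum_product']
  exact Finset.sum_eq_single_of_mem (z, w) (Finset.mem_product.mpr ⟨hz, hw⟩)
    fun b hb hne => h0 b.1 (Finset.mem_product.mp hb).1 b.2 (Finset.mem_product.mp hb).2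
      (by simpa using hne)

lemma Ll_sum_apply {α : Type*} (s : Finset α) (f : α → Ll K) (E : ℤ × ℕ) :
    (∑ i ∈ s, f i).coeff E = ∑ i ∈ s, (f i).coeff E := by
  rw [AddMonoidAlgebra.coeff_sum]; exact Finsupp.finset_sum_apply _ _ E

lemma Ll_sub_apply (f g : Ll K) (E : ℤ × ℕ) : (f - g).coeff E = f.coeff E - g.coeff E :=
  Finsupp.sub_apply _ _ E

lemma Ll_single_apply (a c : ℤ × ℕ) (b : K) :
    (AddMonoidAlgebra.single a b : Ll K).coeff c = if a = c then b else 0 :=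
  Finsupp.single_apply

/-- Coefficient formula for the bracket. -/
lemma br_apply (l : ℕ) (R S : Ll K) (E : ℤ × ℕ) :
    (br l R S).coeff E =
      ∑ q ∈ S.coeff.support, ∑ p ∈ R.coeff.support,
        ((if ((p.1 - (l : ℤ)) + q.1, p.2 + (q.2 - 1)) = E then
            (R.coeff p * ((p.1 : K) / (l : K))) * (S.coeff q * (q.2 : K)) else 0)
        - (if (p.1 + (q.1 - (l : ℤ)), (p.2 - 1) + q.2) = E then
            (R.coeff p * (p.2 : K)) * (S.coeff q * ((q.1 : K) / (l : K))) else 0)) := by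
  classical
  simp only [br, dX, dY, Finsupp.sum, Finset.sum_mul, Finset.mul_sum,
    AddMonoidAlgebra.single_mul_single, Ll_sub_apply, Ll_sum_apply,
    Ll_single_apply, Prod.mk_add_mk, ← Finset.sum_sub_distrib, AddMonoidAlgebra.ofCoeff_single]

/-- If the bracket vanishes and `(z,w)` is the unique decomposition of `z+w` over the
supports, then the corresponding points are aligned. -/
lemma cross_eq_zero_of_br_eq_zero (l : ℕ) (hl : 0 < l) (R S : Ll K)
    (z w : ℤ × ℕ) (hz : z ∈ R.coeff.support) (hw : w ∈ S.coeff.support)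
    (huniq : ∀ q ∈ S.coeff.support, ∀ p ∈ R.coeff.support, p + q = z + w → p = z ∧ q = w)
    (h : br l R S = 0) : cross (pt l z) (pt l w) = 0 := by
  rcases Nat.eq_zero_or_pos (z.2 + w.2) with hzw | hzw
  · have hz2 : z.2 = 0 := by omega
    have hw2 : w.2 = 0 := by omega
    simp [cross, pt, hz2, hw2]
  have hE : (br l R S).coeff (z.1 + w.1 - (l : ℤ), z.2 + w.2 - 1) = 0 := by rw [h]; rfl
  rw [br_apply] at hE
  rw [sum_sum_eq_single S.coeff.support R.coeff.support _ w z hw hz ?hvan] at hE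
  case hvan =>
    intro q hq p hp hne
    have h1 : (if ((p.1 - (l : ℤ)) + q.1, p.2 + (q.2 - 1)) =
        (z.1 + w.1 - (l : ℤ), z.2 + w.2 - 1) then
        (R.coeff p * ((p.1 : K) / (l : K))) * (S.coeff q * (q.2 : K)) else 0) = 0 := by
      split_ifs with hc
      · rcases Nat.eq_zero_or_pos q.2 with hq2 | hq2
        · simp [hq2]
        · exfalso
          rw [Prod.mk.injEq] at hc
          obtain ⟨hc1, hc2⟩ := hc
          have hpq : p + q = z + w := by
            apply Prod.ext <;> simp only [Prod.fst_add, Prod.snd_add] <;> omega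
          obtain ⟨e1, e2⟩ := huniq q hq p hp hpq
          exact hne (by rw [e1, e2])
      · rfl
    have h2 : (if (p.1 + (q.1 - (l : ℤ)), (p.2 - 1) + q.2) =
        (z.1 + w.1 - (l : ℤ), z.2 + w.2 - 1) then
        (R.coeff p * (p.2 : K)) * (S.coeff q * ((q.1 : K) / (l : K))) else 0) = 0 := by
      split_ifs with hc
      · rcases Nat.eq_zero_or_pos p.2 with hp2 | hp2
        · simp [hp2]
        · exfalso
          rw [Prod.mk.injEq] at hc
          obtain ⟨hc1, hc2⟩ := hc
          have hpq : p + q = z + w := by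
            apply Prod.ext <;> simp only [Prod.fst_add, Prod.snd_add] <;> omega
          obtain ⟨e1, e2⟩ := huniq q hq p hp hpq
          exact hne (by rw [e1, e2])
      · rfl
    rw [h1, h2, sub_zero]
  have t1 : (if ((z.1 - (l : ℤ)) + w.1, z.2 + (w.2 - 1)) =
      (z.1 + w.1 - (l : ℤ), z.2 + w.2 - 1) then
      (R.coeff z * ((z.1 : K) / (l : K))) * (S.coeff w * (w.2 : K)) else 0) =
      (R.coeff z * ((z.1 : K) / (l : K))) * (S.coeff w * (w.2 : K)) := by
    rcases Nat.eq_zero_or_pos w.2 with h2 | h2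
    · simp [h2]
    · rw [if_pos]
      rw [Prod.mk.injEq]
      exact ⟨by omega, by omega⟩
  have t2 : (if (z.1 + (w.1 - (l : ℤ)), (z.2 - 1) + w.2) =
      (z.1 + w.1 - (l : ℤ), z.2 + w.2 - 1) then
      (R.coeff z * (z.2 : K)) * (S.coeff w * ((w.1 : K) / (l : K))) else 0) =
      (R.coeff z * (z.2 : K)) * (S.coeff w * ((w.1 : K) / (l : K))) := by
    rcases Nat.eq_zero_or_pos z.2 with h2 | h2
    · simp [h2]
    · rw [if_pos]
      rw [Prod.mk.injEq]
      exact ⟨by omega, by omega⟩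
  rw [t1, t2] at hE
  have hRz : R.coeff z ≠ 0 := Finsupp.mem_support_iff.mp hz
  have hSw : S.coeff w ≠ 0 := Finsupp.mem_support_iff.mp hw
  have hX : ((z.1 : K) / (l : K)) * (w.2 : K) - (z.2 : K) * ((w.1 : K) / (l : K)) = 0 := by
    have hfac : R.coeff z * S.coeff w *
        (((z.1 : K) / (l : K)) * (w.2 : K) - (z.2 : K) * ((w.1 : K) / (l : K))) = 0 := by
      linear_combination hE
    rcases mul_eq_zero.mp hfac with h' | h'
    · exact absurd h' (mul_ne_zero hRz hSw)
    · exact h'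
  have hcast : ((cross (pt l z) (pt l w) : ℚ) : K) = 0 := by
    simp only [cross, pt]
    push_cast
    linear_combination hX
  exact_mod_cast hcast

lemma mem_lead_support {l : ℕ} {ρ σ : ℤ} {P : Ll K} {p : ℤ × ℕ} :
    p ∈ (lead l ρ σ P).coeff.support ↔
      p ∈ P.coeff.support ∧ ((dg l ρ σ p : ℚ) : WithBot ℚ) = v l ρ σ P := by
  simp [lead, Finsupp.support_filter, Finset.mem_filter]

lemma lead_support_nonempty (l : ℕ) (ρ σ : ℤ) {P : Ll K} (hP : P ≠ 0) :
    (lead l ρ σ P).coeff.support.Nonempty := by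
  obtain ⟨p, hp, hsup⟩ := Finset.exists_mem_eq_sup P.coeff.support
    (Finsupp.support_nonempty_iff.mpr (mt AddMonoidAlgebra.coeff_eq_zero.mp hP)) (fun p => ((dg l ρ σ p : ℚ) : WithBot ℚ))
  exact ⟨p, mem_lead_support.mpr ⟨hp, hsup.symm⟩⟩

/-- Proposition 2.3.  If `[ℓ_{ρ,σ}(P), ℓ_{ρ,σ}(Q)] = 0`, then
`st_{ρ,σ}(P) ∼ st_{ρ,σ}(Q)` and `en_{ρ,σ}(P) ∼ en_{ρ,σ}(Q)`. -/
theorem statement3 (l : ℕ) (hl : 0 < l) (ρ σ : ℤ) (hdir : IsDirV (ρ, σ))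
    (P Q : Ll K) (hP : P ≠ 0) (hQ : Q ≠ 0)
    (h : br l (lead l ρ σ P) (lead l ρ σ Q) = 0) :
    Aligned (stPt l ρ σ P) (stPt l ρ σ Q) ∧ Aligned (enPt l ρ σ P) (enPt l ρ σ Q) := by
  have hRne : (lead l ρ σ P).coeff.support.Nonempty := lead_support_nonempty l ρ σ hP
  have hSne : (lead l ρ σ Q).coeff.support.Nonempty := lead_support_nonempty l ρ σ hQ
  constructor
  · set z := Classical.choose
      ((lead l ρ σ P).coeff.support.exists_min_image (fun p => cross (dq (ρ, σ)) (pt l p)) hRne) with hzd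
    set w := Classical.choose
      ((lead l ρ σ Q).coeff.support.exists_min_image (fun p => cross (dq (ρ, σ)) (pt l p)) hSne) with hwd
    obtain ⟨hzmem, hzmin⟩ := Classical.choose_spec
      ((lead l ρ σ P).coeff.support.exists_min_image (fun p => cross (dq (ρ, σ)) (pt l p)) hRne)
    obtain ⟨hwmem, hwmin⟩ := Classical.choose_spec
      ((lead l ρ σ Q).coeff.support.exists_min_image (fun p => cross (dq (ρ, σ)) (pt l p)) hSne)
    simp only [stPt, dif_pos hRne, dif_pos hSne]
    apply cross_eq_zero_of_br_eq_zero l hl (lead l ρ σ P) (lead l ρ σ Q) _ _ hzmem hwmem ?_ h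
    intro q hq p hp hpq
    have hdgp : dg l ρ σ p = dg l ρ σ z := by
      have h1 := (mem_lead_support.mp hp).2
      have h2 := (mem_lead_support.mp hzmem).2
      exact_mod_cast h1.trans h2.symm
    have hdgq : dg l ρ σ q = dg l ρ σ w := by
      have h1 := (mem_lead_support.mp hq).2
      have h2 := (mem_lead_support.mp hwmem).2
      exact_mod_cast h1.trans h2.symm
    have hsum : cross (dq (ρ, σ)) (pt l p) + cross (dq (ρ, σ)) (pt l q) =
        cross (dq (ρ, σ)) (pt l z) + cross (dq (ρ, σ)) (pt l w) := by
      rw [← cross_dq_pt_add, ← cross_dq_pt_add, hpq]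
    have hminp := hzmin p hp
    have hminq := hwmin q hq
    have hgp : cross (dq (ρ, σ)) (pt l p) = cross (dq (ρ, σ)) (pt l z) := by linarith
    have hgq : cross (dq (ρ, σ)) (pt l q) = cross (dq (ρ, σ)) (pt l w) := by linarith
    have hpz := exp_eq_of_dg_cross l hl ρ σ hdir p z hdgp hgp
    refine ⟨hpz, ?_⟩
    have := hpq
    rw [hpz] at this
    exact add_left_cancel this
  · set z := Classical.choose
      ((lead l ρ σ P).coeff.support.exists_max_image (fun p => cross (dq (ρ, σ)) (pt l p)) hRne) with hzd
    set w := Classical.choose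
      ((lead l ρ σ Q).coeff.support.exists_max_image (fun p => cross (dq (ρ, σ)) (pt l p)) hSne) with hwd
    obtain ⟨hzmem, hzmax⟩ := Classical.choose_spec
      ((lead l ρ σ P).coeff.support.exists_max_image (fun p => cross (dq (ρ, σ)) (pt l p)) hRne)
    obtain ⟨hwmem, hwmax⟩ := Classical.choose_spec
      ((lead l ρ σ Q).coeff.support.exists_max_image (fun p => cross (dq (ρ, σ)) (pt l p)) hSne)
    simp only [enPt, dif_pos hRne, dif_pos hSne]
    apply cross_eq_zero_of_br_eq_zero l hl (lead l ρ σ P) (lead l ρ σ Q) _ _ hzmem hwmem ?_ h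
    intro q hq p hp hpq
    have hdgp : dg l ρ σ p = dg l ρ σ z := by
      have h1 := (mem_lead_support.mp hp).2
      have h2 := (mem_lead_support.mp hzmem).2
      exact_mod_cast h1.trans h2.symm
    have hdgq : dg l ρ σ q = dg l ρ σ w := by
      have h1 := (mem_lead_support.mp hq).2
      have h2 := (mem_lead_support.mp hwmem).2
      exact_mod_cast h1.trans h2.symm
    have hsum : cross (dq (ρ, σ)) (pt l p) + cross (dq (ρ, σ)) (pt l q) =
        cross (dq (ρ, σ)) (pt l z) + cross (dq (ρ, σ)) (pt l w) := by
      rw [← cross_dq_pt_add, ← cross_dq_pt_add, hpq]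
    have hmaxp := hzmax p hp
    have hmaxq := hwmax q hq
    have hgp : cross (dq (ρ, σ)) (pt l p) = cross (dq (ρ, σ)) (pt l z) := by linarith
    have hgq : cross (dq (ρ, σ)) (pt l q) = cross (dq (ρ, σ)) (pt l w) := by linarith
    have hpz := exp_eq_of_dg_cross l hl ρ σ hdir p z hdgp hgp
    refine ⟨hpz, ?_⟩
    have := hpq
    rw [hpz] at this
    exact add_left_cancel this

end JC
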